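/- For every ξ ∈ ℝ^3 and every R > 0 there exist θ, θ' ∈ ℂ^3 with θ · θ = 1, θ' · θ' = 1, θ' - θ = ξ (componentwise, viewing ξ as an element of ℂ^3), and |θ| ≥ R. -/

import Mathlib

open Finset

lemma variety_helper (ξ u v : Fin 3 → ℝ) (R : ℝ) (hR : 0 < R)
    (hu : u 0 * ξ 0 + u 1 * ξ 1 + u 2 * ξ 2 = 0)
    (hv : v 0 * ξ 0 + v 1 * ξ 1 + v 2 * ξ 2 = 0)
    (huv : u 0 * v 0 + u 1 * v 1 + u 2 * v 2 = 0)
    (hU : 0 < u 0 ^ 2 + u 1 ^ 2 + u 2 ^ 2)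
    (hV : 0 < v 0 ^ 2 + v 1 ^ 2 + v 2 ^ 2) :
    ∃ θ θ' : Fin 3 → ℂ,
      (∑ j, θ j ^ 2 = 1) ∧ (∑ j, θ' j ^ 2 = 1) ∧
      (∀ j, θ' j - θ j = (ξ j : ℂ)) ∧
      R ≤ Real.sqrt (∑ j, ‖θ j‖ ^ 2) := by
  set U : ℝ := u 0 ^ 2 + u 1 ^ 2 + u 2 ^ 2 with hUdef
  set V : ℝ := v 0 ^ 2 + v 1 ^ 2 + v 2 ^ 2 with hVdef
  set N : ℝ := ξ 0 ^ 2 + ξ 1 ^ 2 + ξ 2 ^ 2 with hNdef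
  have hN : 0 ≤ N := by positivity
  set t : ℝ := (R + 1) / Real.sqrt U with htdef
  set s : ℝ := Real.sqrt ((N / 4 + (R + 1) ^ 2 - 1) / V) with hsdef
  have harg : 0 ≤ (N / 4 + (R + 1) ^ 2 - 1) / V := by
    apply div_nonneg _ hV.le
    nlinarith
  have ht2 : t ^ 2 * U = (R + 1) ^ 2 := by
    rw [htdef, div_pow, Real.sq_sqrt hU.le]
    field_simp
  have hs2 : s ^ 2 * V = N / 4 + (R + 1) ^ 2 - 1 := by
    rw [hsdef, Real.sq_sqrt harg]
    field_simp
  refine ⟨fun j => ⟨-ξ j / 2 + t * u j, s * v j⟩,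
    fun j => ⟨ξ j / 2 + t * u j, s * v j⟩, ?_, ?_, ?_, ?_⟩
  · rw [Fin.sum_univ_three]
    rw [Complex.ext_iff]
    constructor
    · simp [pow_two, Complex.mul_re]
      linear_combination ht2 - hs2 - t * hu
    · simp [pow_two, Complex.mul_im]
      linear_combination (-s) * hv + 2 * t * s * huv
  · rw [Fin.sum_univ_three]
    rw [Complex.ext_iff]
    constructor
    · simp [pow_two, Complex.mul_re]
      linear_combination ht2 - hs2 + t * hu
    · simp [pow_two, Complex.mul_im]
      linear_combination s * hv + 2 * t * s * huv
  · intro j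
    rw [Complex.ext_iff]
    constructor
    · simp; ring
    · simp
  · rw [Fin.sum_univ_three]
    simp only [Complex.sq_norm, Complex.normSq_mk]
    rw [Real.le_sqrt hR.le]
    · have he : (-ξ 0 / 2 + t * u 0) * (-ξ 0 / 2 + t * u 0) + s * v 0 * (s * v 0) +
          ((-ξ 1 / 2 + t * u 1) * (-ξ 1 / 2 + t * u 1) + s * v 1 * (s * v 1)) +
          ((-ξ 2 / 2 + t * u 2) * (-ξ 2 / 2 + t * u 2) + s * v 2 * (s * v 2)) =
          N / 4 + (R + 1) ^ 2 + s ^ 2 * V := by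
        rw [hNdef, hVdef]
        linear_combination ht2 - t * hu
      have hsv : 0 ≤ s ^ 2 * V := mul_nonneg (sq_nonneg s) hV.le
      rw [he]
      clear_value U V N t s
      have hRR : R ^ 2 + 2 * R + 1 = (R + 1) ^ 2 := by ring
      linarith [hN, hsv, hR, hRR]
    · nlinarith [mul_self_nonneg (-ξ 0 / 2 + t * u 0), mul_self_nonneg (-ξ 1 / 2 + t * u 1),
        mul_self_nonneg (-ξ 2 / 2 + t * u 2), mul_self_nonneg (s * v 0),
        mul_self_nonneg (s * v 1), mul_self_nonneg (s * v 2)]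

theorem variety_M_difference_representation (ξ : Fin 3 → ℝ) (R : ℝ) (hR : 0 < R) :
    ∃ θ θ' : Fin 3 → ℂ,
      (∑ j, θ j ^ 2 = 1) ∧ (∑ j, θ' j ^ 2 = 1) ∧
      (∀ j, θ' j - θ j = (ξ j : ℂ)) ∧
      R ≤ Real.sqrt (∑ j, ‖θ j‖ ^ 2) := by
  by_cases h : ξ 0 ^ 2 + ξ 1 ^ 2 = 0
  · have h0 : ξ 0 = 0 := by nlinarith [sq_nonneg (ξ 0), sq_nonneg (ξ 1)]
    have h1 : ξ 1 = 0 := by nlinarith [sq_nonneg (ξ 0), sq_nonneg (ξ 1)]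
    exact variety_helper ξ ![1, 0, 0] ![0, 1, 0] R hR (by simp [h0]) (by simp [h1])
      (by simp) (by norm_num; positivity) (by norm_num; positivity)
  · have hpos : 0 < ξ 0 ^ 2 + ξ 1 ^ 2 :=
      lt_of_le_of_ne (by positivity) (Ne.symm h)
    exact variety_helper ξ ![ξ 1, -ξ 0, 0]
      ![ξ 0 * ξ 2, ξ 1 * ξ 2, -(ξ 0 ^ 2 + ξ 1 ^ 2)] R hR
      (by simp; ring) (by simp; ring) (by simp; ring)
      (by simp; linarith [hpos]) (by simp; nlinarith [sq_nonneg (ξ 2), sq_nonneg (ξ 0 * ξ 2), sq_nonneg (ξ 1 * ξ 2)])
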